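/- For all integers n and m, the integral (2/π)·∫₀^π sin(n x)·sin(m x)/sin²x dx equals 2·sgn(n)·sgn(m)·min(|n|,|m|) when n + m is even, and equals 0 when n + m is odd. -/

import Mathlib

open Real Set Finset
open MeasureTheory Polynomial.Chebyshev

/-- The function 𝔪(j,k) = (1/2)·sgn(j)·sgn(k)·min(|j|,|k|). -/
noncomputable def frakm (j k : ℤ) : ℝ :=
  (1 / 2 : ℝ) * (j.sign : ℝ) * (k.sign : ℝ) * ((min |j| |k| : ℤ) : ℝ)

/-- The interaction coefficient S_{j,k,l,m}. -/
noncomputable def Scoef (j k l m : ℤ) : ℝ :=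
  if Even (j + k + l + m) then
    frakm (j + k - l) m + frakm (j - k + l) m + frakm (-j + k + l) m - frakm (j + k + l) m
  else 0


lemma ae_sin_ne : ∀ᵐ x : ℝ, Real.sin x ≠ 0 := by
  have h : {x : ℝ | Real.sin x = 0} ⊆ Set.range (fun n : ℤ => (n : ℝ) * π) := by
    intro x hx
    rcases Real.sin_eq_zero_iff.mp hx with ⟨n, hn⟩
    exact ⟨n, hn⟩
  have h0 : volume {x : ℝ | Real.sin x = 0} = 0 :=
    measure_mono_null h (Set.Countable.measure_zero (Set.countable_range _) _)
  rw [MeasureTheory.ae_iff]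
  simpa using h0

lemma integral_congr_sin (f g : ℝ → ℝ) (h : ∀ x, Real.sin x ≠ 0 → f x = g x) :
    ∫ x in (0:ℝ)..π, f x = ∫ x in (0:ℝ)..π, g x := by
  apply intervalIntegral.integral_congr_ae
  filter_upwards [ae_sin_ne] with x hx _ using h x hx

lemma sin_div_sin_eq (n : ℤ) (x : ℝ) (hx : Real.sin x ≠ 0) :
    Real.sin (n * x) / Real.sin x = (U ℝ (n - 1)).eval (Real.cos x) := by
  have h := U_real_cos x (n - 1)
  have e : ((n - 1 : ℤ) : ℝ) + 1 = (n : ℝ) := by push_cast; ring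
  rw [e] at h
  rw [div_eq_iff hx]
  exact h.symm

lemma cont_U (n : ℤ) : Continuous fun x : ℝ => (U ℝ n).eval (Real.cos x) :=
  (U ℝ n).continuous.comp Real.continuous_cos

lemma intInt2 (n m : ℤ) :
    IntervalIntegrable (fun x => Real.sin (n * x) * Real.sin (m * x) / Real.sin x ^ 2)
      volume 0 π := by
  have hc : IntervalIntegrable
      (fun x : ℝ => (U ℝ (n - 1)).eval (Real.cos x) * (U ℝ (m - 1)).eval (Real.cos x))
      volume 0 π := ((cont_U (n - 1)).mul (cont_U (m - 1))).intervalIntegrable 0 π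
  apply hc.congr_ae
  filter_upwards [ae_restrict_of_ae ae_sin_ne] with x hx
  rw [← sin_div_sin_eq n x hx, ← sin_div_sin_eq m x hx, div_mul_div_comm, ← sq]

lemma intInt1 (n : ℤ) :
    IntervalIntegrable (fun x => Real.sin (n * x) / Real.sin x) volume 0 π := by
  apply ((cont_U (n - 1)).intervalIntegrable 0 π).congr_ae
  filter_upwards [ae_restrict_of_ae ae_sin_ne] with x hx
  rw [sin_div_sin_eq n x hx]

lemma key_sin (A B x : ℝ) :
    Real.sin (A + x) * Real.sin (B + x) - Real.sin A * Real.sin B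
      = Real.sin (A + B + x) * Real.sin x := by
  rw [Real.sin_add, Real.sin_add, show A + B + x = (A + B) + x by ring, Real.sin_add,
    Real.sin_add, Real.cos_add]
  linear_combination (Real.sin A * Real.sin B) * Real.sin_sq_add_cos_sq x

lemma dirichlet (k : ℕ) :
    ∫ x in (0:ℝ)..π, Real.sin (((2 * (k : ℤ) + 1 : ℤ) : ℝ) * x) / Real.sin x = π := by
  induction k with
  | zero =>
    rw [integral_congr_sin _ (fun _ => (1 : ℝ))]
    · simp
    · intro x hx
      norm_num [div_self hx]
  | succ k ih =>
    have hkey : ∀ x : ℝ, Real.sin x ≠ 0 →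
        Real.sin (((2 * ((k + 1 : ℕ) : ℤ) + 1 : ℤ) : ℝ) * x) / Real.sin x
          = Real.sin (((2 * (k : ℤ) + 1 : ℤ) : ℝ) * x) / Real.sin x
            + 2 * Real.cos ((2 * (k : ℝ) + 2) * x) := by
      intro x hx
      have h : Real.sin ((2 * (k:ℝ) + 2) * x + x) - Real.sin ((2 * (k:ℝ) + 2) * x - x)
          = 2 * Real.cos ((2 * (k:ℝ) + 2) * x) * Real.sin x := by
        rw [Real.sin_add, Real.sin_sub]; ring
      push_cast
      rw [show (2 * ((k:ℝ) + 1) + 1) * x = (2 * (k:ℝ) + 2) * x + x by ring,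
        show (2 * (k:ℝ) + 1) * x = (2 * (k:ℝ) + 2) * x - x by ring]
      rw [div_eq_iff hx, add_mul (Real.sin _ / Real.sin x), div_mul_cancel₀ _ hx]
      linear_combination h
    rw [integral_congr_sin _ _ hkey,
      intervalIntegral.integral_add (intInt1 (2 * k + 1))
        ((Continuous.intervalIntegrable (by fun_prop) 0 π :
          IntervalIntegrable (fun x => 2 * Real.cos ((2 * (k:ℝ) + 2) * x)) volume 0 π)),
      ih]
    have hc : (2 * (k:ℝ) + 2) ≠ 0 := by positivity
    have h0 : ∫ x in (0:ℝ)..π, Real.cos ((2 * (k:ℝ) + 2) * x) = 0 := by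
      rw [intervalIntegral.integral_comp_mul_left Real.cos hc]
      have hs : Real.sin ((2 * (k:ℝ) + 2) * π) = 0 := by
        have h2 := Real.sin_int_mul_pi (2 * (k : ℤ) + 2)
        push_cast at h2
        convert h2 using 2
        try ring
      simp [integral_cos, hs]
    rw [intervalIntegral.integral_const_mul, h0]
    ring

lemma main_nat (a d : ℕ) :
    ∫ x in (0:ℝ)..π,
        Real.sin (((a : ℤ) : ℝ) * x) * Real.sin ((((a : ℤ) + 2 * (d : ℤ) : ℤ) : ℝ) * x)
          / Real.sin x ^ 2
      = a * π := by
  induction a with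
  | zero => simp
  | succ a ih =>
    have hkey : ∀ x : ℝ, Real.sin x ≠ 0 →
        Real.sin ((((a + 1 : ℕ) : ℤ) : ℝ) * x)
            * Real.sin (((((a + 1 : ℕ) : ℤ) + 2 * (d : ℤ) : ℤ) : ℝ) * x) / Real.sin x ^ 2
          = Real.sin (((a : ℤ) : ℝ) * x)
              * Real.sin ((((a : ℤ) + 2 * (d : ℤ) : ℤ) : ℝ) * x) / Real.sin x ^ 2
            + Real.sin (((2 * ((a + d : ℕ) : ℤ) + 1 : ℤ) : ℝ) * x) / Real.sin x := by
      intro x hx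
      have h := key_sin ((a : ℝ) * x) (((a : ℝ) + 2 * (d:ℝ)) * x) x
      push_cast
      rw [show ((a:ℝ) + 1) * x = (a:ℝ) * x + x by ring,
        show ((a:ℝ) + 1 + 2 * (d:ℝ)) * x = ((a:ℝ) + 2 * (d:ℝ)) * x + x by ring,
        show (2 * ((a:ℝ) + (d:ℝ)) + 1) * x = (a:ℝ) * x + ((a:ℝ) + 2 * (d:ℝ)) * x + x by ring,
        show Real.sin ((a:ℝ) * x + x) * Real.sin (((a:ℝ) + 2 * (d:ℝ)) * x + x)
          = Real.sin ((a:ℝ) * x) * Real.sin (((a:ℝ) + 2 * (d:ℝ)) * x)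
            + Real.sin ((a:ℝ) * x + ((a:ℝ) + 2 * (d:ℝ)) * x + x) * Real.sin x
          from by linear_combination h,
        add_div, sq]
      congr 1
      rw [mul_div_assoc, div_mul_cancel_left₀ hx, ← div_eq_mul_inv]
    rw [integral_congr_sin _ _ hkey,
      intervalIntegral.integral_add (intInt2 a ((a : ℤ) + 2 * d)) (intInt1 (2 * ((a + d : ℕ) : ℤ) + 1)),
      ih, dirichlet (a + d)]
    push_cast
    ring

lemma even_case_nat (a b : ℕ) (hab : Even (a + b)) :
    ∫ x in (0:ℝ)..π, Real.sin ((a:ℝ) * x) * Real.sin ((b:ℝ) * x) / Real.sin x ^ 2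
      = ((min a b : ℕ) : ℝ) * π := by
  wlog h : a ≤ b generalizing a b
  · have hba := this b a (by rwa [Nat.add_comm] at hab) (le_of_not_ge h)
    rw [min_comm] at hba
    rw [← hba]
    apply intervalIntegral.integral_congr
    intro x _
    ring_nf
  obtain ⟨c, hc⟩ := hab
  obtain ⟨d, hd⟩ : ∃ d, b = a + 2 * d := ⟨(b - a) / 2, by omega⟩
  subst hd
  have hm := main_nat a d
  rw [min_eq_left (by omega : a ≤ a + 2 * d)]
  push_cast at hm ⊢
  exact hm

lemma odd_case (n m : ℤ) (h : ¬ Even (n + m)) :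
    ∫ x in (0:ℝ)..π, Real.sin (n * x) * Real.sin (m * x) / Real.sin x ^ 2 = 0 := by
  set f : ℝ → ℝ := fun x => Real.sin (n * x) * Real.sin (m * x) / Real.sin x ^ 2 with hf
  have h1 : ∫ x in (0:ℝ)..π, f (π - x) = ∫ x in (0:ℝ)..π, f x := by
    rw [intervalIntegral.integral_comp_sub_left f π]
    norm_num
  have hodd : ((-1:ℝ) ^ n) * ((-1:ℝ) ^ m) = -1 := by
    rw [← zpow_add₀ (by norm_num : (-1:ℝ) ≠ 0)]
    exact Odd.neg_one_zpow (Int.not_even_iff_odd.mp h)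
  have h2 : ∀ x, f (π - x) = - f x := by
    intro x
    have hn : Real.sin ((n:ℝ) * (π - x)) = -((-1:ℝ) ^ n * Real.sin (n * x)) := by
      rw [show (n:ℝ) * (π - x) = (n:ℝ) * π - (n:ℝ) * x by ring]
      exact Real.sin_int_mul_pi_sub ((n:ℝ) * x) n
    have hm : Real.sin ((m:ℝ) * (π - x)) = -((-1:ℝ) ^ m * Real.sin (m * x)) := by
      rw [show (m:ℝ) * (π - x) = (m:ℝ) * π - (m:ℝ) * x by ring]
      exact Real.sin_int_mul_pi_sub ((m:ℝ) * x) m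
    simp only [hf]
    rw [hn, hm, Real.sin_pi_sub]
    rw [show (-((-1:ℝ) ^ n * Real.sin (n * x))) * (-((-1:ℝ) ^ m * Real.sin (m * x)))
        = - (Real.sin (n * x) * Real.sin (m * x)) from by
      linear_combination (Real.sin ((n:ℝ) * x) * Real.sin ((m:ℝ) * x)) * hodd]
    rw [neg_div]
  have h3 : ∫ x in (0:ℝ)..π, f x = - ∫ x in (0:ℝ)..π, f x := by
    nth_rewrite 1 [← h1]
    simp only [h2]
    rw [intervalIntegral.integral_neg]
  linarith

lemma sin_int_mul (n : ℤ) (x : ℝ) :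
    Real.sin ((n:ℝ) * x) = (n.sign : ℝ) * Real.sin ((n.natAbs : ℝ) * x) := by
  rcases lt_trichotomy n 0 with hn | hn | hn
  · have hs : n.sign = -1 := Int.sign_eq_neg_one_iff_neg.mpr hn
    have ha : ((n.natAbs : ℝ)) = -(n:ℝ) := by
      rw [Nat.cast_natAbs, Int.cast_abs]
      exact abs_of_neg (by exact_mod_cast hn)
    rw [hs, ha, show -(n:ℝ) * x = -((n:ℝ) * x) by ring, Real.sin_neg]
    push_cast
    ring
  · subst hn; simp
  · have hs : n.sign = 1 := Int.sign_eq_one_iff_pos.mpr hn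
    have ha : ((n.natAbs : ℝ)) = (n:ℝ) := by
      rw [Nat.cast_natAbs, Int.cast_abs]
      exact abs_of_pos (by exact_mod_cast hn)
    rw [hs, ha]
    push_cast
    ring

/-- the projection integrals C_{nm}. -/
theorem projection_integral (n m : ℤ) :
    (2 / π) * ∫ x in (0:ℝ)..π,
        Real.sin (n * x) * Real.sin (m * x) / (Real.sin x) ^ 2
      = if Even (n + m) then
          2 * (n.sign : ℝ) * (m.sign : ℝ) * ((min |n| |m| : ℤ) : ℝ)
        else 0 := by
  by_cases hpar : Even (n + m)
  · rw [if_pos hpar]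
    have h1 : ∫ x in (0:ℝ)..π, Real.sin (n * x) * Real.sin (m * x) / Real.sin x ^ 2
        = ((n.sign : ℝ) * (m.sign : ℝ)) * ∫ x in (0:ℝ)..π,
            Real.sin ((n.natAbs : ℝ) * x) * Real.sin ((m.natAbs : ℝ) * x) / Real.sin x ^ 2 := by
      rw [← intervalIntegral.integral_const_mul]
      apply intervalIntegral.integral_congr
      intro x _
      dsimp only
      rw [sin_int_mul n x, sin_int_mul m x]
      ring
    have hab : Even (n.natAbs + m.natAbs) := by
      rw [Nat.even_add, Int.natAbs_even, Int.natAbs_even]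
      exact (Int.even_add).mp hpar
    rw [h1, even_case_nat _ _ hab]
    have hmin : ((min |n| |m| : ℤ) : ℝ) = ((min n.natAbs m.natAbs : ℕ) : ℝ) := by
      have h2 : (min |n| |m| : ℤ) = ((min n.natAbs m.natAbs : ℕ) : ℤ) := by
        rw [Int.abs_eq_natAbs, Int.abs_eq_natAbs, Nat.cast_min]
      rw [h2]
      exact_mod_cast rfl
    rw [hmin]
    field_simp
  · rw [if_neg hpar, odd_case n m hpar, mul_zero]
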